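/- arXiv:1401.2802 — 7 statements merged into one kernel-verified Lean document; each statement's English description precedes it below -/
import Mathlib

section
/- Let E be a compact metric space and (S(t)) a strongly continuous Markov (positive, conservative) contraction semigroup on C(E) with generator A. Define V(t)f = log(S(t)e^f) for f ∈ C(E). If f ∈ C(E) and e^f ∈ D(A), then f is in the domain of the generator H of V, i.e. lim_{t↓0} ‖(V(t)f − f)/t − e^{−f}·A(e^f)‖_∞ = 0. -/
open Filter Topology

/-- The pointwise exponential of a continuous function, as a continuous map. -/
noncomputable def expMap {E : Type*} [TopologicalSpace E] (f : C(E, ℝ)) : C(E, ℝ) :=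
  ⟨fun x => Real.exp (f x), Real.continuous_exp.comp f.continuous⟩

/-- For a strongly continuous Markov semigroup `S(t)` on `C(E)` (`E` compact metric) with
generator `A`, and `V(t)f := log (S(t) e^f)`: if `e^f ∈ D(A)` (with `A(e^f) = Aef`), then `f`
is in the domain of the generator `H` of `V`, with `Hf = e^{-f} A(e^f)`, i.e.
`(V(t)f - f)/t → e^{-f}·A(e^f)` uniformly as `t ↓ 0`. -/
theorem stmt_3 {E : Type*} [MetricSpace E] [CompactSpace E]
    (S : ℝ → C(E, ℝ) →L[ℝ] C(E, ℝ))
    (hS0 : S 0 = ContinuousLinearMap.id ℝ C(E, ℝ))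
    (hSsemi : ∀ s t : ℝ, 0 ≤ s → 0 ≤ t → S (s + t) = (S s).comp (S t))
    (hScontr : ∀ t : ℝ, 0 ≤ t → ∀ g : C(E, ℝ), ‖S t g‖ ≤ ‖g‖)
    (hSpos : ∀ t : ℝ, 0 ≤ t → ∀ g : C(E, ℝ), 0 ≤ g → 0 ≤ S t g)
    (hSone : ∀ t : ℝ, 0 ≤ t → S t 1 = 1)
    (hSstrong : ∀ g : C(E, ℝ), ContinuousOn (fun t => S t g) (Set.Ici (0 : ℝ)))
    (f Aef : C(E, ℝ))
    (hAef : Tendsto (fun t : ℝ => t⁻¹ • (S t (expMap f) - expMap f)) (𝓝[>] 0) (𝓝 Aef)) :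
    Tendsto
      (fun t : ℝ =>
        ⨆ x : E, |(Real.log ((S t (expMap f)) x) - f x) / t - Real.exp (-(f x)) * Aef x|)
      (𝓝[>] 0) (𝓝 0) := by
  have hC : (0:ℝ) < Real.exp ‖f‖ := Real.exp_pos _
  set C : ℝ := Real.exp ‖f‖ with hCdef
  set g : ℝ → C(E, ℝ) := fun t => S t (expMap f) - expMap f with hg
  set D : ℝ → C(E, ℝ) := fun t => t⁻¹ • g t with hD
  have hDlim : Tendsto D (𝓝[>] 0) (𝓝 Aef) := by
    rw [hD, hg]; exact hAef
  have hglim : Tendsto (fun t => ‖g t‖) (𝓝[>] 0) (𝓝 0) := by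
    have h1 : Tendsto (fun t : ℝ => t • D t) (𝓝[>] 0) (𝓝 ((0:ℝ) • Aef)) :=
      (tendsto_id.mono_left nhdsWithin_le_nhds).smul hDlim
    rw [zero_smul] at h1
    have h2 : (fun t : ℝ => t • D t) =ᶠ[𝓝[>] 0] g := by
      filter_upwards [self_mem_nhdsWithin] with t ht
      rw [hD]
      simp only [smul_smul]
      rw [mul_inv_cancel₀ (ne_of_gt ht), one_smul]
    have := (h1.congr' h2).norm
    simpa using this
  set B : ℝ → ℝ := fun t => 2 * C ^ 2 * ‖g t‖ * ‖D t‖ + C * ‖D t - Aef‖ with hB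
  have hBlim : Tendsto B (𝓝[>] 0) (𝓝 0) := by
    have h1 : Tendsto (fun t => 2 * C ^ 2 * ‖g t‖ * ‖D t‖) (𝓝[>] 0)
        (𝓝 (2 * C ^ 2 * 0 * ‖Aef‖)) :=
      (tendsto_const_nhds.mul hglim).mul hDlim.norm
    have h2 : Tendsto (fun t => C * ‖D t - Aef‖) (𝓝[>] 0) (𝓝 (C * ‖Aef - Aef‖)) :=
      tendsto_const_nhds.mul (hDlim.sub tendsto_const_nhds).norm
    have := h1.add h2
    rw [hB]
    simpa using this
  have hsmall : ∀ᶠ t in 𝓝[>] (0:ℝ), C * ‖g t‖ ≤ 1 / 2 := by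
    filter_upwards [hglim.eventually (eventually_lt_nhds
      (show (0:ℝ) < 1 / (2 * C) by positivity))] with t ht
    have h1 : C * ‖g t‖ < C * (1 / (2 * C)) := (mul_lt_mul_iff_right₀ hC).2 ht
    have h2 : C * (1 / (2 * C)) = 1 / 2 := by
      field_simp
    linarith
  apply squeeze_zero' (g := B)
  · filter_upwards with t
    exact Real.iSup_nonneg fun x => abs_nonneg _
  · filter_upwards [self_mem_nhdsWithin, hsmall] with t ht hsm
    rcases isEmpty_or_nonempty E with hE | hE
    · rw [Real.iSup_of_isEmpty]
      have : (0:ℝ) ≤ 2 * C ^ 2 * ‖g t‖ * ‖D t‖ := by positivity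
      have : (0:ℝ) ≤ C * ‖D t - Aef‖ := by positivity
      rw [hB]; positivity
    · apply ciSup_le
      intro x
      have ht : (0:ℝ) < t := ht
      set a : ℝ := (S t (expMap f)) x with ha
      set ef : ℝ := Real.exp (f x) with hef
      have hef0 : (0:ℝ) < ef := Real.exp_pos _
      obtain ⟨r, hr⟩ : ∃ r : ℝ, r = (a - ef) * Real.exp (-(f x)) := ⟨_, rfl⟩
      have hgx : (g t) x = a - ef := by
        rw [hg]; simp [expMap, ha, hef]
      have hgx_le : |a - ef| ≤ ‖g t‖ := by
        rw [← hgx, ← Real.norm_eq_abs]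
        exact (g t).norm_coe_le_norm x
      have hexpC : Real.exp (-(f x)) ≤ C := by
        rw [hCdef]
        apply Real.exp_le_exp.2
        have h := f.norm_coe_le_norm x
        rw [Real.norm_eq_abs] at h
        have h' := abs_le.mp h
        linarith [h'.1]
      have hr_le : |r| ≤ C * ‖g t‖ := by
        rw [hr, abs_mul, abs_of_pos (Real.exp_pos _)]
        calc |a - ef| * Real.exp (-(f x)) ≤ ‖g t‖ * C :=
              mul_le_mul hgx_le hexpC (le_of_lt (Real.exp_pos _)) (norm_nonneg _)
          _ = C * ‖g t‖ := mul_comm _ _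
      have hr_half : |r| ≤ 1 / 2 := hr_le.trans hsm
      have hr1 : |r| < 1 := lt_of_le_of_lt hr_half (by norm_num)
      have h1r : (0:ℝ) < 1 + r := by
        have := abs_le.1 hr_half
        linarith [this.1]
      have hee : ef * Real.exp (-(f x)) = 1 := by
        rw [hef, ← Real.exp_add]; simp
      have hae : a = ef * (1 + r) := by
        rw [hr]; linear_combination (ef - a) * hee
      have hloga : Real.log a = f x + Real.log (1 + r) := by
        rw [hae, Real.log_mul (ne_of_gt hef0) (ne_of_gt h1r), Real.log_exp]
      have hkey : |Real.log (1 + r) - r| ≤ 2 * (C * ‖g t‖) * |r| := by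
        have h := Real.abs_log_sub_add_sum_range_le (x := -r) (by rwa [abs_neg]) 1
        simp only [Finset.sum_range_one, pow_one, Nat.cast_zero, zero_add, div_one,
          abs_neg, sub_neg_eq_add] at h
        have h' : |Real.log (1 + r) - r| ≤ |r| ^ (1 + 1) / (1 - |r|) := by
          calc |Real.log (1 + r) - r| = |(-r) + Real.log (1 + r)| := by
                congr 1
                ring
            _ ≤ |r| ^ (1 + 1) / (1 - |r|) := h
        have h2 : |r| ^ (1 + 1) / (1 - |r|) ≤ 2 * |r| ^ 2 := by
          rw [div_le_iff₀ (by linarith)]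
          have hp : |r| ^ (1 + 1) = |r| ^ 2 := by norm_num
          rw [hp]
          nlinarith [mul_nonneg (mul_self_nonneg |r|) (show (0:ℝ) ≤ 1 - 2 * |r| by linarith)]
        calc |Real.log (1 + r) - r| ≤ 2 * |r| ^ 2 := h'.trans h2
          _ = 2 * |r| * |r| := by ring
          _ ≤ 2 * (C * ‖g t‖) * |r| := by
              apply mul_le_mul_of_nonneg_right _ (abs_nonneg _)
              linarith
      have hDx : |t⁻¹ * (a - ef)| ≤ ‖D t‖ := by
        have h := (D t).norm_coe_le_norm x
        rw [Real.norm_eq_abs] at h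
        have hDtx : (D t) x = t⁻¹ * (a - ef) := by
          rw [hD]; simp [hgx]
        rwa [hDtx] at h
      have hrt : |r| / t ≤ C * ‖D t‖ := by
        rw [hr, abs_mul, abs_of_pos (Real.exp_pos _), div_eq_mul_inv]
        calc |a - ef| * Real.exp (-(f x)) * t⁻¹
            = (|t⁻¹ * (a - ef)|) * Real.exp (-(f x)) := by
              rw [abs_mul, abs_of_pos (inv_pos.2 ht)]; ring
          _ ≤ ‖D t‖ * C :=
              mul_le_mul hDx hexpC (le_of_lt (Real.exp_pos _)) (norm_nonneg _)
          _ = C * ‖D t‖ := mul_comm _ _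
      have hsub : |r / t - Real.exp (-(f x)) * Aef x| ≤ C * ‖D t - Aef‖ := by
        have h2 : (D t - Aef) x = t⁻¹ * (a - ef) - Aef x := by
          rw [hD]; simp [hgx]
        have h3 : |t⁻¹ * (a - ef) - Aef x| ≤ ‖D t - Aef‖ := by
          have := (D t - Aef).norm_coe_le_norm x
          rw [Real.norm_eq_abs, h2] at this
          exact this
        have h4 : r / t - Real.exp (-(f x)) * Aef x
            = Real.exp (-(f x)) * (t⁻¹ * (a - ef) - Aef x) := by
          rw [hr]; field_simp
        rw [h4, abs_mul, abs_of_pos (Real.exp_pos _)]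
        exact mul_le_mul hexpC h3 (abs_nonneg _) (le_of_lt hC)
      -- final combination
      have hsplit : (Real.log a - f x) / t - Real.exp (-(f x)) * Aef x
          = (Real.log (1 + r) - r) / t + (r / t - Real.exp (-(f x)) * Aef x) := by
        rw [hloga]; ring
      rw [hsplit]
      have habs1 : |(Real.log (1 + r) - r) / t| ≤ 2 * C ^ 2 * ‖g t‖ * ‖D t‖ := by
        rw [abs_div, abs_of_pos ht]
        calc |Real.log (1 + r) - r| / t ≤ 2 * (C * ‖g t‖) * |r| / t := by
              gcongr
          _ = 2 * (C * ‖g t‖) * (|r| / t) := by ring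
          _ ≤ 2 * (C * ‖g t‖) * (C * ‖D t‖) := by
              apply mul_le_mul_of_nonneg_left hrt
              positivity
          _ = 2 * C ^ 2 * ‖g t‖ * ‖D t‖ := by ring
      calc |(Real.log (1 + r) - r) / t + (r / t - Real.exp (-(f x)) * Aef x)|
          ≤ |(Real.log (1 + r) - r) / t| + |r / t - Real.exp (-(f x)) * Aef x| :=
            abs_add_le _ _
        _ ≤ 2 * C ^ 2 * ‖g t‖ * ‖D t‖ + C * ‖D t - Aef‖ := add_le_add habs1 hsub
        _ = B t := rfl
  · exact hBlim
end

section
/- With E compact metric, (S(t)) a strongly continuous positive contraction semigroup on C(E) preserving constants, and V(t)f = log(S(t)e^f): the family (V(t))_{t≥0} is a semigroup (V(t+s) = V(t)V(s)), and each V(t) is a contraction for the sup norm: ‖V(t)f − V(t)g‖_∞ ≤ ‖f − g‖_∞ for all f, g ∈ C(E). -/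
open Filter Topology

lemma expMap_lower {E : Type*} [MetricSpace E] [CompactSpace E]
    (S : ℝ → C(E, ℝ) →L[ℝ] C(E, ℝ))
    (hSpos : ∀ t : ℝ, 0 ≤ t → ∀ g : C(E, ℝ), 0 ≤ g → 0 ≤ S t g)
    (hSone : ∀ t : ℝ, 0 ≤ t → S t 1 = 1)
    (t : ℝ) (ht : 0 ≤ t) (f : C(E, ℝ)) (x : E) :
    Real.exp (-‖f‖) ≤ (S t (expMap f)) x := by
  set c : ℝ := Real.exp (-‖f‖) with hc
  have h1 : (0 : C(E, ℝ)) ≤ expMap f - c • 1 := by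
    rw [ContinuousMap.le_def]
    intro y
    have : -‖f‖ ≤ f y := neg_le_of_abs_le (f.norm_coe_le_norm y)
    have := Real.exp_le_exp.mpr this
    simp only [ContinuousMap.zero_apply, ContinuousMap.sub_apply, ContinuousMap.smul_apply,
      ContinuousMap.one_apply, smul_eq_mul, mul_one, expMap, ContinuousMap.coe_mk]
    linarith
  have h2 := hSpos t ht _ h1
  rw [map_sub, map_smul, hSone t ht, ContinuousMap.le_def] at h2
  have := h2 x
  simp only [ContinuousMap.zero_apply, ContinuousMap.sub_apply, ContinuousMap.smul_apply,
    ContinuousMap.one_apply, smul_eq_mul, mul_one] at this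
  linarith

lemma log_contraction {E : Type*} [MetricSpace E] [CompactSpace E]
    (S : ℝ → C(E, ℝ) →L[ℝ] C(E, ℝ))
    (hSpos : ∀ t : ℝ, 0 ≤ t → ∀ g : C(E, ℝ), 0 ≤ g → 0 ≤ S t g)
    (hSone : ∀ t : ℝ, 0 ≤ t → S t 1 = 1)
    (t : ℝ) (ht : 0 ≤ t) (f g : C(E, ℝ)) (x : E) :
    Real.log ((S t (expMap f)) x) - Real.log ((S t (expMap g)) x) ≤ ‖f - g‖ := by
  have hfx : 0 < (S t (expMap f)) x :=
    lt_of_lt_of_le (Real.exp_pos _) (expMap_lower S hSpos hSone t ht f x)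
  have hgx : 0 < (S t (expMap g)) x :=
    lt_of_lt_of_le (Real.exp_pos _) (expMap_lower S hSpos hSone t ht g x)
  set K : ℝ := ‖f - g‖ with hK
  have h1 : (0 : C(E, ℝ)) ≤ Real.exp K • expMap g - expMap f := by
    rw [ContinuousMap.le_def]
    intro y
    have hle : f y - g y ≤ K := by
      have := (f - g).norm_coe_le_norm y
      have : |f y - g y| ≤ K := by simpa using this
      exact le_of_abs_le this
    have : Real.exp (f y) ≤ Real.exp K * Real.exp (g y) := by
      rw [← Real.exp_add]
      exact Real.exp_le_exp.mpr (by linarith)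
    simp only [ContinuousMap.zero_apply, ContinuousMap.sub_apply, ContinuousMap.smul_apply,
      smul_eq_mul, expMap, ContinuousMap.coe_mk]
    linarith
  have h2 := hSpos t ht _ h1
  rw [map_sub, map_smul, ContinuousMap.le_def] at h2
  have h3 := h2 x
  simp only [ContinuousMap.zero_apply, ContinuousMap.sub_apply, ContinuousMap.smul_apply,
    smul_eq_mul] at h3
  have h4 : (S t (expMap f)) x ≤ Real.exp K * (S t (expMap g)) x := by linarith
  have h5 : Real.log ((S t (expMap f)) x) ≤ Real.log (Real.exp K * (S t (expMap g)) x) :=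
    Real.log_le_log hfx h4
  rw [Real.log_mul (Real.exp_ne_zero K) (ne_of_gt hgx), Real.log_exp] at h5
  linarith

/-- For a strongly continuous Markov semigroup `S(t)` on `C(E)` (`E` compact metric) and
`V(t)f := log (S(t) e^f)`: the family `(V(t))` is a semigroup, `V(t+s)f = V(t)(V(s)f)`
(here `g` is the continuous function `e^{V(s)f} = exp (log (S(s)e^f))` so that
`V(t)(V(s)f) = log (S(t) g)`), and each `V(t)` is a sup-norm contraction. -/
theorem stmt_4 {E : Type*} [MetricSpace E] [CompactSpace E]
    (S : ℝ → C(E, ℝ) →L[ℝ] C(E, ℝ))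
    (hS0 : S 0 = ContinuousLinearMap.id ℝ C(E, ℝ))
    (hSsemi : ∀ s t : ℝ, 0 ≤ s → 0 ≤ t → S (s + t) = (S s).comp (S t))
    (hScontr : ∀ t : ℝ, 0 ≤ t → ∀ g : C(E, ℝ), ‖S t g‖ ≤ ‖g‖)
    (hSpos : ∀ t : ℝ, 0 ≤ t → ∀ g : C(E, ℝ), 0 ≤ g → 0 ≤ S t g)
    (hSone : ∀ t : ℝ, 0 ≤ t → S t 1 = 1)
    (hSstrong : ∀ g : C(E, ℝ), ContinuousOn (fun t => S t g) (Set.Ici (0 : ℝ))) :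
    (∀ s t : ℝ, 0 ≤ s → 0 ≤ t → ∀ f g : C(E, ℝ),
        (∀ y : E, g y = Real.exp (Real.log ((S s (expMap f)) y))) →
        ∀ x : E, Real.log ((S (t + s) (expMap f)) x) = Real.log ((S t g) x)) ∧
    (∀ t : ℝ, 0 ≤ t → ∀ f g : C(E, ℝ),
        (⨆ x : E, |Real.log ((S t (expMap f)) x) - Real.log ((S t (expMap g)) x)|) ≤ ‖f - g‖) := by
  constructor
  · intro s t hs ht f g hg x
    have hgeq : g = S s (expMap f) := by
      ext y
      rw [hg y, Real.exp_log
        (lt_of_lt_of_le (Real.exp_pos _) (expMap_lower S hSpos hSone s hs f y))]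
    rw [hgeq, hSsemi t s ht hs]
    rfl
  · intro t ht f g
    rcases isEmpty_or_nonempty E with hE | hE
    · simp [Real.iSup_of_isEmpty, norm_nonneg]
    · apply ciSup_le
      intro x
      rw [abs_sub_le_iff]
      constructor
      · exact log_contraction S hSpos hSone t ht f g x
      · have := log_contraction S hSpos hSone t ht g f x
        rwa [show g - f = -(f - g) by ring, norm_neg] at this
end

section
/- Let E be compact metric, (S(t)) a strongly continuous Markov semigroup with generator A, λ > 0, J(λ) = (I − λA)^{−1}, H f = e^{−f}A(e^f) for f with e^f ∈ D(A), and R(λ)f = log(J(λ)e^f). Then for any f ∈ C(E): R(λ)f is in the domain of H and (I − λH)(R(λ)f) ≥ f pointwise. -/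
open Filter Topology

/-- Let `A` (with domain `domA`) be the generator of a Markov semigroup on `C(E)` (`E` compact
metric), `λ > 0`, and `J = J(λ) = (I - λA)⁻¹` the resolvent, which maps into `domA`, satisfies
`(I - λA) J = I`, is positivity preserving with `J 1 = 1`. Put `R(λ)f = log (J e^f)` and
`Hh = e^{-h} A(e^h)`. Then for every `f ∈ C(E)`, `R(λ)f` is in the domain of `H`
(i.e. `e^{R(λ)f} ∈ domA`, where `g` denotes the continuous function `e^{R(λ)f}`), and
`(I - λH)(R(λ)f) ≥ f` pointwise. -/
theorem stmt_6 {E : Type*} [MetricSpace E] [CompactSpace E]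
    (domA : Set C(E, ℝ)) (A : C(E, ℝ) → C(E, ℝ)) (lam : ℝ) (hlam : 0 < lam)
    (J : C(E, ℝ) →L[ℝ] C(E, ℝ))
    (hJdom : ∀ g : C(E, ℝ), J g ∈ domA)
    (hres : ∀ g : C(E, ℝ), J g - lam • A (J g) = g)
    (hJpos : ∀ g : C(E, ℝ), 0 ≤ g → 0 ≤ J g)
    (hJone : J 1 = 1)
    (f : C(E, ℝ)) :
    ∀ g : C(E, ℝ), (∀ x : E, g x = Real.exp (Real.log ((J (expMap f)) x))) →
      g ∈ domA ∧
      ∀ x : E,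
        f x ≤ Real.log ((J (expMap f)) x) -
          lam * (Real.exp (-Real.log ((J (expMap f)) x)) * (A g) x) := by
  intro g hg
  -- positivity of J e^f
  have hpos : ∀ x : E, 0 < (J (expMap f)) x := by
    intro x
    have hne : Nonempty E := ⟨x⟩
    obtain ⟨x₀, -, hx₀⟩ := isCompact_univ.exists_isMinOn Set.univ_nonempty
      f.continuous.continuousOn
    set ε : ℝ := Real.exp (f x₀) with hε
    have hεpos : 0 < ε := Real.exp_pos _
    have h1 : (0 : C(E, ℝ)) ≤ expMap f - ε • 1 := by
      intro y
      simp only [ContinuousMap.toFun_eq_coe, ContinuousMap.sub_apply, ContinuousMap.smul_apply,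
        ContinuousMap.one_apply, ContinuousMap.zero_apply, expMap, ContinuousMap.coe_mk,
        smul_eq_mul, mul_one]
      have := Real.exp_le_exp.mpr (hx₀ (Set.mem_univ y))
      linarith
    have h2 := hJpos _ h1 x
    have h3 : J (expMap f - ε • 1) = J (expMap f) - ε • J 1 := by
      rw [map_sub, map_smul]
    rw [h3, hJone] at h2
    simp only [ContinuousMap.toFun_eq_coe, ContinuousMap.sub_apply, ContinuousMap.smul_apply,
      ContinuousMap.one_apply, ContinuousMap.zero_apply, smul_eq_mul, mul_one] at h2
    linarith
  have hgeq : g = J (expMap f) := by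
    ext x
    rw [hg x, Real.exp_log (hpos x)]
  refine ⟨hgeq ▸ hJdom _, fun x => ?_⟩
  set u : ℝ := (J (expMap f)) x with hu
  have hupos : 0 < u := hpos x
  have hresx : u - lam * (A (J (expMap f))) x = Real.exp (f x) := by
    have := congrArg (fun h : C(E, ℝ) => h x) (hres (expMap f))
    simpa [ContinuousMap.sub_apply, expMap, smul_eq_mul, hu] using this
  have hAg : lam * (A g) x = u - Real.exp (f x) := by
    rw [hgeq]; linarith
  rw [Real.exp_neg, Real.exp_log hupos]
  have ht : 0 < Real.exp (f x) / u := div_pos (Real.exp_pos _) hupos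
  have hlog := Real.log_le_sub_one_of_pos ht
  rw [Real.log_div (Real.exp_pos _).ne' hupos.ne', Real.log_exp] at hlog
  have : lam * (u⁻¹ * (A g) x) = u⁻¹ * (lam * (A g) x) := by ring
  rw [this, hAg]
  have hinv : u⁻¹ * (u - Real.exp (f x)) = 1 - Real.exp (f x) / u := by
    field_simp
  rw [hinv]
  linarith
end

section
/- Let E be a finite set, r: E × E → ℝ≥0, and define Hf(x) = Σ_y r(x,y)(e^{f(y)−f(x)} − 1), A^g f(x) = Σ_y r(x,y)e^{g(y)−g(x)}(f(y) − f(x)), and Lg = A^g g − Hg. Then for every x ∈ E and all f, g: E → ℝ, Hf(x) ≥ A^g f(x) − Lg(x), with equality when g = f. -/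
/-- `Hf(x) = Σ_y r(x,y)(e^{f(y)-f(x)} - 1)` for a finite-state Markov jump process. -/
noncomputable def Hop {E : Type*} [Fintype E] (r : E → E → ℝ) (f : E → ℝ) (x : E) : ℝ :=
  ∑ y, r x y * (Real.exp (f y - f x) - 1)

/-- `A^g f(x) = Σ_y r(x,y) e^{g(y)-g(x)} (f(y)-f(x))`, the tilted generator. -/
noncomputable def Aop {E : Type*} [Fintype E] (r : E → E → ℝ) (g f : E → ℝ) (x : E) : ℝ :=
  ∑ y, r x y * Real.exp (g y - g x) * (f y - f x)

/-- `Lg = A^g g - Hg`, the pre-Lagrangian. -/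
noncomputable def Lop {E : Type*} [Fintype E] (r : E → E → ℝ) (g : E → ℝ) (x : E) : ℝ :=
  Aop r g g x - Hop r g x

/-- Pointwise operator duality: `Hf(x) ≥ A^g f(x) - Lg(x)` for all `f, g`, with equality
when `g = f`. -/
theorem stmt_8 {E : Type*} [Fintype E] (r : E → E → ℝ) (hr : ∀ x y, 0 ≤ r x y) :
    ∀ (f g : E → ℝ) (x : E),
      Aop r g f x - Lop r g x ≤ Hop r f x ∧ Aop r f f x - Lop r f x = Hop r f x := by
  intro f g x
  refine ⟨?_, by simp [Lop]⟩
  simp only [Aop, Lop, Hop, ← Finset.sum_sub_distrib]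
  apply Finset.sum_le_sum
  intro y _
  have key : Real.exp (g y - g x) * (f y - f x) - Real.exp (g y - g x) * (g y - g x)
      ≤ Real.exp (f y - f x) - Real.exp (g y - g x) := by
    have h := Real.add_one_le_exp ((f y - f x) - (g y - g x))
    have hpos := (Real.exp_pos (g y - g x)).le
    have he : Real.exp (f y - f x)
        = Real.exp (g y - g x) * Real.exp ((f y - f x) - (g y - g x)) := by
      rw [← Real.exp_add]; ring_nf
    nlinarith [mul_le_mul_of_nonneg_left h hpos]
  nlinarith [hr x y]
end

section
/- Let D be a barrelled locally convex space, N ⊆ D a barrel such that sup_{f ∈ cN}‖Hf‖ < ∞ for every c > 0, where H: D → C(E). Let U = ⋃_n n·N° where N° is the polar of N in D'. If u ∈ D' \ U, then L(μ,u) = sup_{f∈D}(⟨f,u⟩ − ⟨Hf,μ⟩) = ∞ for every probability measure μ on E. -/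
open MeasureTheory Pointwise

/-- Let `D` be a barrelled locally convex space, `N ⊆ D` a barrel with
`sup_{f ∈ N} ‖Hf‖ ≤ 1` and `sup_{f ∈ cN} ‖Hf‖ < ∞` for every `c > 0`, and let
`U = ⋃_n n·N°` where `N° = {u ∈ D' : |⟨f,u⟩| ≤ 1 ∀ f ∈ N}` is the polar of `N`.
If `u ∈ D' \ U`, then `L(μ,u) = sup_{f ∈ D}(⟨f,u⟩ - ⟨Hf,μ⟩) = ∞` for every probability
measure `μ` on the compact metric space `E`. -/
theorem stmt_10 {E D : Type*} [MetricSpace E] [CompactSpace E] [MeasurableSpace E] [BorelSpace E]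
    [AddCommGroup D] [Module ℝ D] [TopologicalSpace D] [IsTopologicalAddGroup D]
    [ContinuousSMul ℝ D] [LocallyConvexSpace ℝ D] [BarrelledSpace ℝ D]
    (H : D → C(E, ℝ)) (N : Set D)
    (hNconv : Convex ℝ N) (hNbal : Balanced ℝ N) (hNabs : Absorbent ℝ N) (hNcl : IsClosed N)
    (hH1 : ∀ f ∈ N, ‖H f‖ ≤ 1)
    (hHc : ∀ c : ℝ, 0 < c → ∃ M : ℝ, ∀ f ∈ c • N, ‖H f‖ ≤ M)
    (u : WeakDual ℝ D)
    (hu : u ∉ ⋃ n : ℕ, (n : ℝ) • {v : WeakDual ℝ D | ∀ f ∈ N, |v f| ≤ 1})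
    (μ : Measure E) (hμ : IsProbabilityMeasure μ) :
    (⨆ f : D, ((u f - ∫ x, (H f) x ∂μ : ℝ) : EReal)) = ⊤ := by
  rw [iSup_eq_top]
  intro b hb
  obtain ⟨n, hn⟩ : ∃ n : ℕ, b < (((n : ℝ) : EReal)) := by
    induction b using EReal.rec with
    | bot => exact ⟨0, by simp⟩
    | coe x =>
      obtain ⟨n, hn⟩ := exists_nat_gt x
      exact ⟨n, by exact_mod_cast hn⟩
    | top => exact absurd hb (lt_irrefl _)
  simp only [Set.mem_iUnion, not_exists] at hu
  have h1 := hu (n + 1)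
  have hc : ((n + 1 : ℕ) : ℝ) ≠ 0 := by positivity
  rw [Set.mem_smul_set_iff_inv_smul_mem₀ hc] at h1
  simp only [Set.mem_setOf_eq, not_forall] at h1
  obtain ⟨f, hfN, hf⟩ := h1
  have happ : (((n + 1 : ℕ) : ℝ)⁻¹ • u) f = ((n + 1 : ℕ) : ℝ)⁻¹ * u f := rfl
  rw [happ, not_le, abs_mul, abs_inv, abs_of_pos (by positivity : (0:ℝ) < ((n+1:ℕ):ℝ))] at hf
  have hfabs : ((n + 1 : ℕ) : ℝ) < |u f| := by
    have hp : (0:ℝ) < ((n + 1 : ℕ) : ℝ) := by positivity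
    nlinarith [mul_inv_cancel₀ hc]
  -- pick g = f or -f so that u g = |u f| and g ∈ N
  obtain ⟨g, hgN, hg⟩ : ∃ g, g ∈ N ∧ |u f| = u g := by
    rcases abs_cases (u f) with ⟨h, _⟩ | ⟨h, _⟩
    · exact ⟨f, hfN, h⟩
    · refine ⟨-f, ?_, by simpa using h⟩
      have := hNbal (-1) (by norm_num)
      exact this ⟨f, hfN, by simp⟩
  -- integral bound
  have hint : ∫ x, (H g) x ∂μ ≤ 1 := by
    have hb1 : ∀ x, (H g) x ≤ 1 := fun x =>
      le_trans (le_abs_self _) (le_trans ((H g).norm_coe_le_norm x) (hH1 g hgN))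
    calc ∫ x, (H g) x ∂μ ≤ ∫ _x, (1:ℝ) ∂μ := by
          have hint' : Integrable (fun x => (H g) x) μ := by
            rw [← integrableOn_univ]
            exact ((H g).continuous.continuousOn).integrableOn_compact isCompact_univ
          exact integral_mono hint' (integrable_const 1) hb1
      _ = 1 := by simp
  refine ⟨g, lt_of_lt_of_le hn ?_⟩
  have : ((n : ℝ)) ≤ u g - ∫ x, (H g) x ∂μ := by
    have : ((n+1 : ℕ) : ℝ) < u g := hg ▸ hfabs
    push_cast at this ⊢
    linarith
  exact_mod_cast this
end

section
/- Let S be a countable set, W a compact metric space, E = W^S. For f ∈ C(E) define Δ_f(x) = sup{|f(η) − f(ζ)| : η_y = ζ_y for all y ≠ x} and |||f||| = Σ_{x∈S} Δ_f(x). If f ∈ C(E) with |||f||| < ∞, then 2·‖f‖_Q ≤ |||f|||, where ‖f‖_Q = inf_{c∈ℝ}‖f − c·1‖_∞ is the quotient norm modulo constants. -/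
/-- The oscillation `Δ_f(x)` of `f : C(W^S, ℝ)` in the coordinate `x`:
`Δ_f(x) = sup {|f η - f ζ| : η_y = ζ_y for all y ≠ x}`. -/
noncomputable def Delta {S W : Type*} [TopologicalSpace W]
    (f : C((S → W), ℝ)) (x : S) : ℝ :=
  sSup {d : ℝ | ∃ η ζ : S → W, (∀ y : S, y ≠ x → η y = ζ y) ∧ d = |f η - f ζ|}

section aux

set_option linter.unusedSectionVars false
variable {S W : Type*} [Countable S] [MetricSpace W] [CompactSpace W]

lemma delta_bddAbove (f : C((S → W), ℝ)) (x : S) :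
    BddAbove {d : ℝ | ∃ η ζ : S → W, (∀ y : S, y ≠ x → η y = ζ y) ∧ d = |f η - f ζ|} := by
  refine ⟨2 * ‖f‖, ?_⟩
  rintro d ⟨η, ζ, -, rfl⟩
  have h1 : |f η| ≤ ‖f‖ := f.norm_coe_le_norm η
  have h2 : |f ζ| ≤ ‖f‖ := f.norm_coe_le_norm ζ
  calc |f η - f ζ| ≤ |f η| + |f ζ| := abs_sub _ _
    _ ≤ 2 * ‖f‖ := by linarith

lemma delta_nonneg (f : C((S → W), ℝ)) (x : S) : 0 ≤ Delta f x := by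
  by_cases hE : Nonempty (S → W)
  · obtain ⟨θ⟩ := hE
    exact le_csSup (delta_bddAbove f x) ⟨θ, θ, fun _ _ => rfl, by simp⟩
  · have : {d : ℝ | ∃ η ζ : S → W, (∀ y : S, y ≠ x → η y = ζ y) ∧ d = |f η - f ζ|} = ∅ := by
      ext d; simp only [Set.mem_setOf_eq, Set.mem_empty_iff_false, iff_false]
      rintro ⟨η, _, _, _⟩; exact hE ⟨η⟩
    rw [Delta, this, Real.sSup_empty]

lemma keyA (f : C((S → W), ℝ)) (hf : Summable fun x : S => Delta f x) (η ζ : S → W) :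
    f η - f ζ ≤ ∑' x : S, Delta f x := by
  classical
  obtain ⟨e, he⟩ := Countable.exists_injective_nat S
  set g : ℕ → S → W := fun n x => if e x < n then ζ x else η x with hg
  have g0 : g 0 = η := by funext x; simp [hg]
  -- step bound
  have step : ∀ n : ℕ, f η - f (g n) ≤
      ∑ x ∈ (Finset.range n).preimage e he.injOn, Delta f x := by
    intro n
    induction n with
    | zero => simp [g0]
    | succ n ih =>
      by_cases h : ∃ x₀ : S, e x₀ = n
      · obtain ⟨x₀, hx₀⟩ := h
        have hTn : (Finset.range (n+1)).preimage e he.injOn =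
            insert x₀ ((Finset.range n).preimage e he.injOn) := by
          ext y
          simp only [Finset.mem_preimage, Finset.mem_range, Finset.mem_insert]
          constructor
          · intro hy
            rcases Nat.lt_succ_iff_lt_or_eq.mp hy with h1 | h1
            · exact Or.inr h1
            · exact Or.inl (he (h1.trans hx₀.symm))
          · rintro (rfl | hy)
            · omega
            · omega
        have hx₀notin : x₀ ∉ (Finset.range n).preimage e he.injOn := by
          simp [Finset.mem_preimage, hx₀]
        have hdiff : f (g n) - f (g (n+1)) ≤ Delta f x₀ := by
          have hmem : |f (g n) - f (g (n+1))| ∈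
              {d : ℝ | ∃ η' ζ' : S → W, (∀ y : S, y ≠ x₀ → η' y = ζ' y) ∧
                d = |f η' - f ζ'|} := by
            refine ⟨g n, g (n+1), fun y hy => ?_, rfl⟩
            have hne : e y ≠ n := fun hEq => hy (he (hEq.trans hx₀.symm))
            simp only [hg]
            split_ifs <;> first | rfl | omega
          have := le_csSup (delta_bddAbove f x₀) hmem
          exact (le_abs_self _).trans this
        rw [hTn, Finset.sum_insert hx₀notin]
        have := ih
        linarith
      · push_neg at h
        have hgeq : g (n+1) = g n := by
          funext y
          have hne : e y ≠ n := h y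
          simp only [hg]
          split_ifs <;> first | rfl | omega
        have hTn : (Finset.range (n+1)).preimage e he.injOn =
            (Finset.range n).preimage e he.injOn := by
          ext y
          simp only [Finset.mem_preimage, Finset.mem_range]
          have := h y
          omega
        rw [hTn, hgeq]
        exact ih
  have bound : ∀ n : ℕ, f η - f (g n) ≤ ∑' x : S, Delta f x := fun n =>
    (step n).trans (Summable.sum_le_tsum _ (fun x _ => delta_nonneg f x) hf)
  -- convergence
  have hgt : Filter.Tendsto g Filter.atTop (nhds ζ) := by
    rw [tendsto_pi_nhds]
    intro x
    refine tendsto_const_nhds.congr' ?_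
    filter_upwards [Filter.eventually_ge_atTop (e x + 1)] with n hn
    simp [hg, show e x < n by omega]
  have hft : Filter.Tendsto (fun n => f η - f (g n)) Filter.atTop (nhds (f η - f ζ)) :=
    tendsto_const_nhds.sub ((f.continuous.tendsto ζ).comp hgt)
  exact le_of_tendsto hft (Filter.Eventually.of_forall bound)

end aux

/-- For `E = W^S` (`S` countable, `W` compact metric) and `f ∈ C(E)` with
`|||f||| = Σ_x Δ_f(x) < ∞`, one has `2 ‖f‖_Q ≤ |||f|||`, where
`‖f‖_Q = inf_c ‖f - c·1‖_∞` is the quotient norm modulo constants. -/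
theorem stmt_14 {S W : Type*} [Countable S] [MetricSpace W] [CompactSpace W]
    (f : C((S → W), ℝ)) (hf : Summable fun x : S => Delta f x) :
    2 * (⨅ c : ℝ, ‖f - ContinuousMap.const (S → W) c‖) ≤ ∑' x : S, Delta f x := by
  have hbdd : BddBelow (Set.range fun c : ℝ => ‖f - ContinuousMap.const (S → W) c‖) := by
    refine ⟨0, ?_⟩
    rintro r ⟨c, rfl⟩
    exact norm_nonneg _
  have htsum_nonneg : (0 : ℝ) ≤ ∑' x : S, Delta f x :=
    tsum_nonneg fun x => delta_nonneg f x
  by_cases hE : Nonempty (S → W)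
  · haveI := hE
    obtain ⟨η₀, -, hη₀⟩ := isCompact_univ.exists_isMaxOn Set.univ_nonempty
      f.continuous.continuousOn
    obtain ⟨ζ₀, -, hζ₀⟩ := isCompact_univ.exists_isMinOn Set.univ_nonempty
      f.continuous.continuousOn
    set c₀ : ℝ := (f η₀ + f ζ₀) / 2 with hc₀
    have hle : f ζ₀ ≤ f η₀ := hζ₀ (Set.mem_univ η₀)
    have h2 : ‖f - ContinuousMap.const (S → W) c₀‖ ≤ (f η₀ - f ζ₀) / 2 := by
      rw [ContinuousMap.norm_le _ (by linarith)]
      intro t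
      have h1 := hη₀ (Set.mem_univ t)
      have h2 := hζ₀ (Set.mem_univ t)
      simp only [Set.mem_setOf_eq] at h1 h2
      simp only [ContinuousMap.sub_apply, ContinuousMap.const_apply, Real.norm_eq_abs]
      rw [abs_le]
      constructor <;> [skip; skip] <;> simp only [hc₀] <;> linarith
    have h1 : (⨅ c : ℝ, ‖f - ContinuousMap.const (S → W) c‖) ≤
        ‖f - ContinuousMap.const (S → W) c₀‖ := ciInf_le hbdd c₀
    have h3 := keyA f hf η₀ ζ₀
    linarith
  · have hzero : ∀ c : ℝ, ‖f - ContinuousMap.const (S → W) c‖ = 0 := by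
      intro c
      refine le_antisymm ?_ (norm_nonneg _)
      rw [ContinuousMap.norm_le _ le_rfl]
      intro t
      exact absurd ⟨t⟩ hE
    simp only [hzero]
    rw [ciInf_const]
    linarith
end

section
/- Let a: ℝ^d → ℝ^{d×d} with a(x) symmetric non-negative definite, b: ℝ^d → ℝ^d, and for f ∈ C_0²(ℝ^d) define Af = (1/2)Σ_{ij}a_{ij}∂_i∂_j f + Σ_i b_i ∂_i f and Hf = Af + (1/2)Σ_{ij}a_{ij}(∂_i f)(∂_j f). Fix a Borel probability measure μ on ℝ^d and a continuous linear functional α on C_0²(ℝ^d). Define L(μ,α) = sup_{f ∈ C_0²}(⟨f,α⟩ − ∫Hf dμ). If L(μ,α) < ∞, then, writing α̂ = α − A'μ (i.e. ⟨f,α̂⟩ = ⟨f,α⟩ − ∫Af dμ), one has L(μ,α) = (1/2)·sup{ |⟨f,α̂⟩|² / ∫|∇f|²_a dμ : f ∈ C_0², ∫|∇f|²_a dμ ≠ 0 }, where |∇f|²_a = Σ_{ij}a_{ij}∂_i f ∂_j f; moreover ⟨f,α̂⟩ = 0 whenever ∫|∇f|²_a dμ = 0. -/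
open Filter Topology MeasureTheory

/-- The partial derivative `∂_i f` of `f : ℝ^d → ℝ`. -/
noncomputable def pd {d : ℕ} (i : Fin d) (f : (Fin d → ℝ) → ℝ) : (Fin d → ℝ) → ℝ :=
  fun x => fderiv ℝ f x (Pi.single i 1)

/-- The space `C_0²(ℝ^d)`: twice continuously differentiable functions vanishing at infinity
together with their derivatives up to order two. -/
def C02 (d : ℕ) : Set ((Fin d → ℝ) → ℝ) :=
  {f | ContDiff ℝ 2 f ∧ Tendsto f (cocompact (Fin d → ℝ)) (𝓝 0) ∧
    (∀ i : Fin d, Tendsto (pd i f) (cocompact (Fin d → ℝ)) (𝓝 0)) ∧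
    ∀ i j : Fin d, Tendsto (pd i (pd j f)) (cocompact (Fin d → ℝ)) (𝓝 0)}

/-- The diffusion generator `Af = (1/2) Σ_{ij} a_{ij} ∂_i∂_j f + Σ_i b_i ∂_i f`. -/
noncomputable def Adiff {d : ℕ} (a : (Fin d → ℝ) → Fin d → Fin d → ℝ)
    (b : (Fin d → ℝ) → Fin d → ℝ) (f : (Fin d → ℝ) → ℝ) (x : Fin d → ℝ) : ℝ :=
  (1 / 2) * (∑ i, ∑ j, a x i j * pd i (pd j f) x) + ∑ i, b x i * pd i f x

/-- The square field `|∇f|²_a = Σ_{ij} a_{ij} (∂_i f)(∂_j f)`. -/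
noncomputable def gradSq {d : ℕ} (a : (Fin d → ℝ) → Fin d → Fin d → ℝ)
    (f : (Fin d → ℝ) → ℝ) (x : Fin d → ℝ) : ℝ :=
  ∑ i, ∑ j, a x i j * pd i f x * pd j f x

/-- The Hamiltonian `Hf = Af + (1/2)|∇f|²_a`. -/
noncomputable def Hdiff {d : ℕ} (a : (Fin d → ℝ) → Fin d → Fin d → ℝ)
    (b : (Fin d → ℝ) → Fin d → ℝ) (f : (Fin d → ℝ) → ℝ) (x : Fin d → ℝ) : ℝ :=
  Adiff a b f x + (1 / 2) * gradSq a f x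

/- ### Auxiliary lemmas -/

lemma pd_contDiff {d n : ℕ} {f : (Fin d → ℝ) → ℝ} (hf : ContDiff ℝ (n+1) f) (i : Fin d) :
    ContDiff ℝ n (pd i f) := by
  have h : ContDiff ℝ n (fderiv ℝ f) := hf.fderiv_right (by norm_cast)
  exact (ContinuousLinearMap.apply ℝ ℝ (Pi.single i 1)).contDiff.comp h

lemma pd_const_mul' {d : ℕ} {c : ℝ} {f : (Fin d → ℝ) → ℝ} (hf : Differentiable ℝ f) (i : Fin d) :
    pd i (fun x => c * f x) = fun x => c * pd i f x := by
  funext x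
  simp [pd, fderiv_const_mul (hf x)]

section Aux
variable {d : ℕ} {a : (Fin d → ℝ) → Fin d → Fin d → ℝ} {b : (Fin d → ℝ) → Fin d → ℝ}
  {f : (Fin d → ℝ) → ℝ}

lemma ctwo' (hf : ContDiff ℝ 2 f) : ContDiff ℝ ((1:ℕ)+1) f := by exact_mod_cast hf

lemma pd_cont' (hf : ContDiff ℝ 2 f) (i : Fin d) : Continuous (pd i f) :=
  (pd_contDiff (n := 1) (ctwo' hf) i).continuous

lemma pd_diff' (hf : ContDiff ℝ 2 f) (i : Fin d) : Differentiable ℝ (pd i f) :=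
  (pd_contDiff (n := 1) (ctwo' hf) i).differentiable (by norm_num)

lemma pd_pd_cont' (hf : ContDiff ℝ 2 f) (i j : Fin d) : Continuous (pd i (pd j f)) :=
  (pd_contDiff (n := 0) (pd_contDiff (n := 1) (ctwo' hf) j) i).continuous

lemma pd_pd_const_mul' {c : ℝ} (hf : ContDiff ℝ 2 f) (i j : Fin d) :
    pd i (pd j (fun x => c * f x)) = fun x => c * pd i (pd j f) x := by
  rw [pd_const_mul' (hf.differentiable two_ne_zero) j, pd_const_mul' (pd_diff' hf j) i]

lemma C02_smul' (hf : f ∈ C02 d) (c : ℝ) : (fun x => c * f x) ∈ C02 d := by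
  obtain ⟨h1, h2, h3, h4⟩ := hf
  refine ⟨contDiff_const.mul h1, by simpa using h2.const_mul c, fun i => ?_, fun i j => ?_⟩
  · rw [pd_const_mul' (h1.differentiable two_ne_zero) i]
    simpa using (h3 i).const_mul c
  · rw [pd_pd_const_mul' h1 i j]
    simpa using (h4 i j).const_mul c

lemma C02_zero' : (fun _ : Fin d → ℝ => (0:ℝ)) ∈ C02 d := by
  have hz : ∀ i : Fin d, pd i (fun _ : Fin d → ℝ => (0:ℝ)) = fun _ => 0 := by
    intro i; funext x; simp [pd]
  refine ⟨contDiff_const, tendsto_const_nhds, fun i => ?_, fun i j => ?_⟩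
  · rw [hz i]; exact tendsto_const_nhds
  · rw [hz j, hz i]; exact tendsto_const_nhds

lemma Adiff_const_mul' (hf : ContDiff ℝ 2 f) (c : ℝ) (x : Fin d → ℝ) :
    Adiff a b (fun y => c * f y) x = c * Adiff a b f x := by
  have e1 : ∀ i j : Fin d, pd i (pd j (fun y => c * f y)) x = c * pd i (pd j f) x := by
    intro i j; rw [pd_pd_const_mul' hf i j]
  have e2 : ∀ i : Fin d, pd i (fun y => c * f y) x = c * pd i f x := by
    intro i; rw [pd_const_mul' (hf.differentiable two_ne_zero) i]
  simp only [Adiff, e1, e2, mul_add, Finset.mul_sum]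
  simp [mul_comm, mul_left_comm, mul_assoc]

lemma gradSq_const_mul' (hf : ContDiff ℝ 2 f) (c : ℝ) (x : Fin d → ℝ) :
    gradSq a (fun y => c * f y) x = c ^ 2 * gradSq a f x := by
  have e2 : ∀ i : Fin d, pd i (fun y => c * f y) x = c * pd i f x := by
    intro i; rw [pd_const_mul' (hf.differentiable two_ne_zero) i]
  simp only [gradSq, e2, pow_two, Finset.mul_sum]
  simp [mul_comm, mul_left_comm, mul_assoc]

end Aux

lemma bounded_of_tendsto_zero' {d : ℕ} {g : (Fin d → ℝ) → ℝ} (hg : Continuous g)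
    (h0 : Tendsto g (cocompact (Fin d → ℝ)) (𝓝 0)) : ∃ M, ∀ x, |g x| ≤ M := by
  have h1 : ∀ᶠ x in cocompact (Fin d → ℝ), |g x| ≤ 1 := by
    filter_upwards [Metric.tendsto_nhds.mp h0 1 one_pos] with x hx
    simpa [Real.dist_eq] using hx.le
  obtain ⟨K, hK, hKs⟩ := mem_cocompact.mp h1
  obtain ⟨C, hC⟩ := hK.exists_bound_of_continuousOn hg.continuousOn
  refine ⟨max C 1, fun x => ?_⟩
  by_cases hx : x ∈ K
  · exact le_max_of_le_left (by simpa using hC x hx)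
  · exact le_max_of_le_right (hKs hx)

lemma bdd_mul' {X : Type*} {g h : X → ℝ} (hg : ∃ M, ∀ x, |g x| ≤ M) (hh : ∃ M, ∀ x, |h x| ≤ M) :
    ∃ M, ∀ x, |g x * h x| ≤ M := by
  obtain ⟨M, hM⟩ := hg; obtain ⟨N, hN⟩ := hh
  exact ⟨M * N, fun x => by
    rw [abs_mul]
    exact mul_le_mul (hM x) (hN x) (abs_nonneg _) ((abs_nonneg _).trans (hM x))⟩

lemma bdd_sum' {ι X : Type*} [Fintype ι] {g : ι → X → ℝ} (h : ∀ i, ∃ M, ∀ x, |g i x| ≤ M) :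
    ∃ M, ∀ x, |∑ i, g i x| ≤ M := by
  choose M hM using h
  exact ⟨∑ i, M i, fun x =>
    (Finset.abs_sum_le_sum_abs _ _).trans (Finset.sum_le_sum fun i _ => hM i x)⟩

lemma bdd_add' {X : Type*} {g h : X → ℝ} (hg : ∃ M, ∀ x, |g x| ≤ M) (hh : ∃ M, ∀ x, |h x| ≤ M) :
    ∃ M, ∀ x, |g x + h x| ≤ M := by
  obtain ⟨M, hM⟩ := hg; obtain ⟨N, hN⟩ := hh
  exact ⟨M + N, fun x => (abs_add_le _ _).trans (add_le_add (hM x) (hN x))⟩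

lemma integrable_of_bdd_cont' {d : ℕ} {g : (Fin d → ℝ) → ℝ} (hg : Continuous g)
    (hb : ∃ M, ∀ x, |g x| ≤ M) (μ : Measure (Fin d → ℝ)) [IsFiniteMeasure μ] :
    Integrable g μ := by
  obtain ⟨M, hM⟩ := hb
  exact ⟨hg.aestronglyMeasurable, HasFiniteIntegral.of_bounded (ae_of_all μ hM)⟩

/-- Dawson–Gärtner form of the Lagrangian: with `a` symmetric non-negative definite, `b`
bounded continuous, `μ` a Borel probability measure on `ℝ^d` and `α` a continuous linear
functional on `C_0²(ℝ^d)`, if `L(μ,α) = sup_{f ∈ C_0²}(⟨f,α⟩ - ∫ Hf dμ) < ∞` then,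
writing `α̂ = α - A'μ`, one has `⟨f,α̂⟩ = 0` whenever `∫|∇f|²_a dμ = 0`, and
`L(μ,α) = (1/2) sup { ⟨f,α̂⟩² / ∫|∇f|²_a dμ : f ∈ C_0², ∫|∇f|²_a dμ ≠ 0 }`. -/
theorem stmt_17 {d : ℕ}
    (a : (Fin d → ℝ) → Fin d → Fin d → ℝ) (b : (Fin d → ℝ) → Fin d → ℝ)
    (ha_cont : ∀ i j, Continuous fun x => a x i j)
    (ha_bdd : ∃ Ca : ℝ, ∀ x i j, |a x i j| ≤ Ca)
    (ha_symm : ∀ x i j, a x i j = a x j i)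
    (ha_pos : ∀ (x : Fin d → ℝ) (v : Fin d → ℝ), 0 ≤ ∑ i, ∑ j, a x i j * v i * v j)
    (hb_cont : ∀ i, Continuous fun x => b x i)
    (hb_bdd : ∃ Cb : ℝ, ∀ x i, |b x i| ≤ Cb)
    (μ : Measure (Fin d → ℝ)) [IsProbabilityMeasure μ]
    (α : ((Fin d → ℝ) → ℝ) →ₗ[ℝ] ℝ)
    (hα_cont : ∃ Cα : ℝ, ∀ f ∈ C02 d, |α f| ≤
      Cα * ((⨆ x, |f x|) + (∑ i, ⨆ x, |pd i f x|) + ∑ i, ∑ j, ⨆ x, |pd i (pd j f) x|))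
    (hL_fin : (⨆ f : (C02 d), ((α (f : (Fin d → ℝ) → ℝ)
        - ∫ x, Hdiff a b (f : (Fin d → ℝ) → ℝ) x ∂μ : ℝ) : EReal)) ≠ ⊤) :
    (∀ f ∈ C02 d, (∫ x, gradSq a f x ∂μ) = 0 → α f - ∫ x, Adiff a b f x ∂μ = 0) ∧
    (⨆ f : (C02 d), ((α (f : (Fin d → ℝ) → ℝ)
        - ∫ x, Hdiff a b (f : (Fin d → ℝ) → ℝ) x ∂μ : ℝ) : EReal))
      = (((1 / 2) * sSup {v : ℝ | ∃ f ∈ C02 d, (∫ x, gradSq a f x ∂μ) ≠ 0 ∧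
          v = (α f - ∫ x, Adiff a b f x ∂μ) ^ 2 / ∫ x, gradSq a f x ∂μ} : ℝ) : EReal) := by
  classical
  obtain ⟨Ca, hCa⟩ := ha_bdd
  obtain ⟨Cb, hCb⟩ := hb_bdd
  set L : EReal := ⨆ f : (C02 d), ((α (f : (Fin d → ℝ) → ℝ)
      - ∫ x, Hdiff a b (f : (Fin d → ℝ) → ℝ) x ∂μ : ℝ) : EReal) with hLdef
  set SS : Set ℝ := {v : ℝ | ∃ f ∈ C02 d, (∫ x, gradSq a f x ∂μ) ≠ 0 ∧
      v = (α f - ∫ x, Adiff a b f x ∂μ) ^ 2 / ∫ x, gradSq a f x ∂μ} with hSSdef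
  -- nonnegativity of gradSq integrals
  have hGnn : ∀ f : (Fin d → ℝ) → ℝ, 0 ≤ ∫ x, gradSq a f x ∂μ := fun f =>
    integral_nonneg fun x => ha_pos x fun i => pd i f x
  -- boundedness of derivatives
  have hbddf : ∀ f ∈ C02 d, (∀ i : Fin d, ∃ M, ∀ x, |pd i f x| ≤ M) ∧
      (∀ i j : Fin d, ∃ M, ∀ x, |pd i (pd j f) x| ≤ M) := fun f hf =>
    ⟨fun i => bounded_of_tendsto_zero' (pd_cont' hf.1 i) (hf.2.2.1 i),
     fun i j => bounded_of_tendsto_zero' (pd_pd_cont' hf.1 i j) (hf.2.2.2 i j)⟩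
  -- integrability
  have hintA : ∀ f ∈ C02 d, Integrable (fun x => Adiff a b f x) μ := by
    intro f hf
    apply integrable_of_bdd_cont'
    · exact (continuous_const.mul (continuous_finset_sum _ fun i _ =>
        continuous_finset_sum _ fun j _ => (ha_cont i j).mul (pd_pd_cont' hf.1 i j))).add
        (continuous_finset_sum _ fun i _ => (hb_cont i).mul (pd_cont' hf.1 i))
    · exact bdd_add'
        (bdd_mul' (g := fun _ => (1/2 : ℝ)) ⟨1/2, fun _ => le_of_eq (abs_of_nonneg (by norm_num))⟩
          (bdd_sum' fun i => bdd_sum' fun j =>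
            bdd_mul' ⟨Ca, fun x => hCa x i j⟩ ((hbddf f hf).2 i j)))
        (bdd_sum' fun i => bdd_mul' ⟨Cb, fun x => hCb x i⟩ ((hbddf f hf).1 i))
  have hintG : ∀ f ∈ C02 d, Integrable (fun x => gradSq a f x) μ := by
    intro f hf
    apply integrable_of_bdd_cont'
    · exact continuous_finset_sum _ fun i _ => continuous_finset_sum _ fun j _ =>
        ((ha_cont i j).mul (pd_cont' hf.1 i)).mul (pd_cont' hf.1 j)
    · exact bdd_sum' fun i => bdd_sum' fun j =>
        bdd_mul' (bdd_mul' ⟨Ca, fun x => hCa x i j⟩ ((hbddf f hf).1 i)) ((hbddf f hf).1 j)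
  -- value of the functional on scaled functions
  have hTval : ∀ f ∈ C02 d, ∀ c : ℝ,
      α (fun y => c * f y) - ∫ x, Hdiff a b (fun y => c * f y) x ∂μ
        = c * (α f - ∫ x, Adiff a b f x ∂μ) - c^2/2 * ∫ x, gradSq a f x ∂μ := by
    intro f hf c
    have hα : α (fun y => c * f y) = c * α f := by
      have h : (fun y => c * f y) = c • f := by funext y; simp
      rw [h, α.map_smul, smul_eq_mul]
    have hH : ∫ x, Hdiff a b (fun y => c * f y) x ∂μ
        = c * ∫ x, Adiff a b f x ∂μ + c^2/2 * ∫ x, gradSq a f x ∂μ := by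
      have hpt : (fun x => Hdiff a b (fun y => c * f y) x)
          = fun x => c * Adiff a b f x + c^2/2 * gradSq a f x := by
        funext x
        rw [Hdiff, Adiff_const_mul' hf.1 c x, gradSq_const_mul' hf.1 c x]; ring
      rw [hpt, integral_add ((hintA f hf).const_mul c) ((hintG f hf).const_mul _),
        integral_const_mul, integral_const_mul]
    rw [hα, hH]; ring
  -- the elements of the sup
  have hle : ∀ g ∈ C02 d, ((α g - ∫ x, Hdiff a b g x ∂μ : ℝ) : EReal) ≤ L := by
    intro g hg
    rw [hLdef]
    exact le_iSup (fun f : (C02 d) => ((α (f : (Fin d → ℝ) → ℝ)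
      - ∫ x, Hdiff a b (f : (Fin d → ℝ) → ℝ) x ∂μ : ℝ) : EReal)) ⟨g, hg⟩
  have h0 : ((0:ℝ) : EReal) ≤ L := by
    have hz : ∀ i : Fin d, pd i (fun _ : Fin d → ℝ => (0:ℝ)) = fun _ => 0 := by
      intro i; funext x; simp [pd]
    have hH0 : ∀ x, Hdiff a b (fun _ : Fin d → ℝ => (0:ℝ)) x = 0 := by
      intro x; simp [Hdiff, Adiff, gradSq, hz]
    have hA0 : α (fun _ : Fin d → ℝ => (0:ℝ)) = 0 := by
      have h : (fun _ : Fin d → ℝ => (0:ℝ)) = (0 : (Fin d → ℝ) → ℝ) := rfl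
      rw [h, map_zero]
    have h := hle _ C02_zero'
    rw [hA0] at h
    simpa [hH0] using h
  have hbot : L ≠ ⊥ := by
    intro h; rw [h, le_bot_iff] at h0; exact absurd h0 (by simp)
  have hLr : L = ((L.toReal : ℝ) : EReal) := (EReal.coe_toReal hL_fin hbot).symm
  set r : ℝ := L.toReal with hrdef
  have hr0 : (0:ℝ) ≤ r := by
    rw [hLr] at h0; exact_mod_cast h0
  -- the scaled inequality in ℝ
  have hcler : ∀ f ∈ C02 d, ∀ c : ℝ,
      c * (α f - ∫ x, Adiff a b f x ∂μ) - c^2/2 * ∫ x, gradSq a f x ∂μ ≤ r := by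
    intro f hf c
    have h := hle _ (C02_smul' hf c)
    rw [hTval f hf c, hLr] at h
    exact_mod_cast h
  -- Part 1
  have part1 : ∀ f ∈ C02 d, (∫ x, gradSq a f x ∂μ) = 0 →
      α f - ∫ x, Adiff a b f x ∂μ = 0 := by
    intro f hf hG0
    by_contra hA
    have h := hcler f hf ((r+1)/(α f - ∫ x, Adiff a b f x ∂μ))
    rw [hG0] at h
    simp only [mul_zero, sub_zero] at h
    rw [div_mul_cancel₀ _ hA] at h
    linarith
  -- Upper bound for the set SS
  have hub : ∀ v ∈ SS, v ≤ 2 * r := by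
    rintro v ⟨f, hf, hG0, rfl⟩
    have hGpos : 0 < ∫ x, gradSq a f x ∂μ := (hGnn f).lt_of_ne' hG0
    have h := hcler f hf ((α f - ∫ x, Adiff a b f x ∂μ) / (∫ x, gradSq a f x ∂μ))
    set A := α f - ∫ x, Adiff a b f x ∂μ with hA
    set G := ∫ x, gradSq a f x ∂μ with hG
    have e : A / G * A - (A / G)^2/2 * G = A^2 / G / 2 := by
      field_simp; ring
    rw [e] at h
    linarith
  have hbddS : BddAbove SS := ⟨2*r, fun v hv => hub v hv⟩
  have hSnn : ∀ v ∈ SS, 0 ≤ v := by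
    rintro v ⟨f, hf, hG0, rfl⟩
    exact div_nonneg (sq_nonneg _) (hGnn f)
  have hsup0 : 0 ≤ sSup SS := by
    rcases Set.eq_empty_or_nonempty SS with h | h
    · simp [h, Real.sSup_empty]
    · obtain ⟨v, hv⟩ := h
      exact (hSnn v hv).trans (le_csSup hbddS hv)
  have hsup2r : sSup SS ≤ 2*r := by
    rcases Set.eq_empty_or_nonempty SS with h | h
    · rw [h, Real.sSup_empty]; linarith
    · exact csSup_le h hub
  -- Upper bound : L ≤ (1/2) sSup SS
  have hupper : L ≤ (((1/2) * sSup SS : ℝ) : EReal) := by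
    rw [hLdef]
    apply iSup_le
    rintro ⟨f, hf⟩
    have hH : ∫ x, Hdiff a b f x ∂μ
        = ∫ x, Adiff a b f x ∂μ + (1/2) * ∫ x, gradSq a f x ∂μ := by
      have hpt : (fun x => Hdiff a b f x)
          = fun x => Adiff a b f x + (1/2) * gradSq a f x := rfl
      rw [hpt, integral_add (hintA f hf) ((hintG f hf).const_mul _), integral_const_mul]
    show ((α f - ∫ x, Hdiff a b f x ∂μ : ℝ) : EReal) ≤ (((1/2) * sSup SS : ℝ) : EReal)
    rw [EReal.coe_le_coe_iff]
    by_cases hG0 : (∫ x, gradSq a f x ∂μ) = 0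
    · have hA0 := part1 f hf hG0
      have hz : α f - ∫ x, Hdiff a b f x ∂μ = 0 := by
        rw [hH, hG0]; linarith
      rw [hz]
      exact mul_nonneg (by norm_num) hsup0
    · have hGpos : 0 < ∫ x, gradSq a f x ∂μ := (hGnn f).lt_of_ne' hG0
      have hmem : (α f - ∫ x, Adiff a b f x ∂μ)^2 / (∫ x, gradSq a f x ∂μ) ∈ SS :=
        ⟨f, hf, hG0, rfl⟩
      have hle2 := le_csSup hbddS hmem
      have key : α f - ∫ x, Hdiff a b f x ∂μ
          ≤ 1/2 * ((α f - ∫ x, Adiff a b f x ∂μ)^2 / (∫ x, gradSq a f x ∂μ)) := by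
        rw [hH]
        have h2 : 0 ≤ ((α f - ∫ x, Adiff a b f x ∂μ) - ∫ x, gradSq a f x ∂μ)^2
            / (2 * ∫ x, gradSq a f x ∂μ) := div_nonneg (sq_nonneg _) (by linarith)
        have e : 1/2 * ((α f - ∫ x, Adiff a b f x ∂μ)^2 / ∫ x, gradSq a f x ∂μ)
            - (α f - (∫ x, Adiff a b f x ∂μ + 1/2 * ∫ x, gradSq a f x ∂μ))
            = ((α f - ∫ x, Adiff a b f x ∂μ) - ∫ x, gradSq a f x ∂μ)^2
              / (2 * ∫ x, gradSq a f x ∂μ) := by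
          field_simp
          ring
        linarith
      exact key.trans (by linarith)
  refine ⟨part1, le_antisymm hupper ?_⟩
  rw [hLr]
  exact EReal.coe_le_coe_iff.mpr (by linarith)
end
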